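/- arXiv:0704.1966 — 2 statements merged into one kernel-verified Lean document; each statement's English description precedes it below -/
import Mathlib

section
/- Let F : 𝔻 → Ω_n be holomorphic (n ≥ 2), let ζ₁, ζ₂ ∈ 𝔻, and set W_j = F(ζ_j). For λ ∈ σ(W_j) let m(λ) be the multiplicity of λ as a root of the minimal polynomial of W_j. Then max{ max_{μ∈σ(W₂)} ∏_{λ∈σ(W₁)} M(μ,λ)^{m(λ)}, max_{λ∈σ(W₁)} ∏_{μ∈σ(W₂)} M(λ,μ)^{m(μ)} } ≤ |ζ₁ − ζ₂| / |1 − conj(ζ₂)ζ₁|, where M(z₁,z₂) = |(z₁ − z₂)/(1 − conj(z₂)z₁)| is the pseudohyperbolic distance. -/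
open Complex Metric Polynomial

/-- The spectral radius of an n×n complex matrix. -/
noncomputable def specRad {n : ℕ} (A : Matrix (Fin n) (Fin n) ℂ) : ℝ :=
  sSup ((fun z => ‖z‖) '' spectrum ℂ A)

/-- The pseudohyperbolic distance on the unit disc. -/
noncomputable def pseudoDist (z₁ z₂ : ℂ) : ℝ :=
  ‖(z₁ - z₂) / (1 - (starRingEnd ℂ) z₂ * z₁)‖

namespace SSUB
open scoped Matrix
variable {n : ℕ}

lemma eval_charpoly (A : Matrix (Fin n) (Fin n) ℂ) (x : ℂ) :
    (Matrix.charpoly A).eval x = (x • (1 : Matrix (Fin n) (Fin n) ℂ) - A).det := by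
  rw [Matrix.charpoly, ← Polynomial.coe_evalRingHom, RingHom.map_det]
  congr 1
  ext i j
  by_cases h : i = j
  · subst h
    simp [Matrix.charmatrix_apply_eq, Matrix.sub_apply, Matrix.one_apply, Matrix.smul_apply]
  · simp [Matrix.charmatrix_apply_ne _ _ _ h, Matrix.sub_apply, Matrix.one_apply, h,
      Matrix.smul_apply]

lemma mem_spectrum_iff_det {A : Matrix (Fin n) (Fin n) ℂ} {x : ℂ} :
    x ∈ spectrum ℂ A ↔ (x • (1 : Matrix (Fin n) (Fin n) ℂ) - A).det = 0 := by
  rw [spectrum.mem_iff, Matrix.isUnit_iff_isUnit_det, isUnit_iff_ne_zero, not_not,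
    Algebra.algebraMap_eq_smul_one]

lemma mem_spectrum_iff_root {A : Matrix (Fin n) (Fin n) ℂ} {x : ℂ} :
    x ∈ spectrum ℂ A ↔ (Matrix.charpoly A).IsRoot x := by
  rw [mem_spectrum_iff_det, IsRoot, eval_charpoly]

lemma spectrum_finite (A : Matrix (Fin n) (Fin n) ℂ) : (spectrum ℂ A).Finite := by
  refine Set.Finite.subset (Polynomial.finite_setOf_isRoot (p := Matrix.charpoly A) ?_) ?_
  · exact (Matrix.charpoly_monic A).ne_zero
  · intro x hx
    exact mem_spectrum_iff_root.1 hx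


lemma abs_lt_one_of_specRad {A : Matrix (Fin n) (Fin n) ℂ} (h : specRad A < 1)
    {x : ℂ} (hx : x ∈ spectrum ℂ A) : ‖x‖ < 1 := by
  refine lt_of_le_of_lt ?_ h
  exact le_csSup (((spectrum_finite A).image _).bddAbove) ⟨x, hx, rfl⟩

lemma one_sub_conj_mul_ne_zero {a b : ℂ} (ha : ‖a‖ < 1) (hb : ‖b‖ < 1) :
    1 - (starRingEnd ℂ) b * a ≠ 0 := by
  intro h
  have h1 : (1 : ℂ) = (starRingEnd ℂ) b * a := by linear_combination h
  have : ‖(starRingEnd ℂ) b * a‖ = 1 := by rw [← h1]; simp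
  rw [norm_mul, Complex.norm_conj] at this
  nlinarith [norm_nonneg a, norm_nonneg b]

lemma key_identity (a b : ℂ) :
    ‖1 - (starRingEnd ℂ) b * a‖ ^ 2 - ‖a - b‖ ^ 2
      = (1 - ‖a‖ ^ 2) * (1 - ‖b‖ ^ 2) := by
  have key : ((Complex.normSq (1 - (starRingEnd ℂ) b * a) : ℂ)) - Complex.normSq (a - b)
      = (1 - Complex.normSq a) * (1 - Complex.normSq b) := by
    simp only [← Complex.mul_conj, map_sub, map_mul, map_one, Complex.conj_conj]
    ring
  have keyR : Complex.normSq (1 - (starRingEnd ℂ) b * a) - Complex.normSq (a - b)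
      = (1 - Complex.normSq a) * (1 - Complex.normSq b) := by exact_mod_cast key
  simpa only [Complex.sq_norm] using keyR

lemma abs_sub_le_abs_one_sub {a b : ℂ} (ha : ‖a‖ < 1) (hb : ‖b‖ < 1) :
    ‖a - b‖ ≤ ‖1 - (starRingEnd ℂ) b * a‖ := by
  have h := key_identity a b
  have h1 : 0 < 1 - ‖a‖ ^ 2 := by nlinarith [norm_nonneg a]
  have h2 : 0 < 1 - ‖b‖ ^ 2 := by nlinarith [norm_nonneg b]
  have hsq : ‖a - b‖ ^ 2 ≤ ‖1 - (starRingEnd ℂ) b * a‖ ^ 2 := by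
    nlinarith [mul_pos h1 h2]
  exact le_of_pow_le_pow_left₀ two_ne_zero (norm_nonneg _) hsq

lemma pseudoDist_le_one {a b : ℂ} (ha : ‖a‖ < 1) (hb : ‖b‖ < 1) :
    pseudoDist a b ≤ 1 := by
  rw [pseudoDist, norm_div]
  have hne := one_sub_conj_mul_ne_zero ha hb
  have hpos : 0 < ‖1 - (starRingEnd ℂ) b * a‖ := by
    simpa [norm_pos_iff] using hne
  rw [div_le_one hpos]
  exact abs_sub_le_abs_one_sub ha hb

lemma pseudoDist_symm (a b : ℂ) : pseudoDist a b = pseudoDist b a := by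
  rw [pseudoDist, pseudoDist, norm_div, norm_div]
  congr 1
  · exact norm_sub_rev _ _
  · rw [← Complex.norm_conj (1 - (starRingEnd ℂ) a * b)]
    simp only [map_sub, map_one, map_mul, Complex.conj_conj]
    ring_nf

lemma pseudoDist_nonneg (a b : ℂ) : 0 ≤ pseudoDist a b := norm_nonneg _


def MDiff (M : ℂ → Matrix (Fin n) (Fin n) ℂ) : Prop :=
  ∀ i j, DifferentiableOn ℂ (fun ζ => M ζ i j) (Metric.ball (0:ℂ) 1)

lemma MDiff.const (A : Matrix (Fin n) (Fin n) ℂ) : MDiff (fun _ => A) :=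
  fun _ _ => differentiableOn_const _

lemma MDiff.mul {M N : ℂ → Matrix (Fin n) (Fin n) ℂ} (hM : MDiff M) (hN : MDiff N) :
    MDiff (fun ζ => M ζ * N ζ) := by
  intro i j
  simp only [Matrix.mul_apply]
  exact DifferentiableOn.fun_sum fun k _ => (hM i k).mul (hN k j)

lemma MDiff.pow {M : ℂ → Matrix (Fin n) (Fin n) ℂ} (hM : MDiff M) (k : ℕ) :
    MDiff (fun ζ => M ζ ^ k) := by
  induction k with
  | zero => simpa using MDiff.const 1
  | succ k ih => simp only [pow_succ]; exact ih.mul hM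

lemma MDiff.sub {M N : ℂ → Matrix (Fin n) (Fin n) ℂ} (hM : MDiff M) (hN : MDiff N) :
    MDiff (fun ζ => M ζ - N ζ) := by
  intro i j
  simp only [Matrix.sub_apply]
  exact (hM i j).sub (hN i j)

lemma MDiff.smul {M : ℂ → Matrix (Fin n) (Fin n) ℂ} (hM : MDiff M) (c : ℂ) :
    MDiff (fun ζ => c • M ζ) := by
  intro i j
  simp only [Matrix.smul_apply, smul_eq_mul]
  exact (differentiableOn_const c).mul (hM i j)

lemma MDiff.det {M : ℂ → Matrix (Fin n) (Fin n) ℂ} (hM : MDiff M) :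
    DifferentiableOn ℂ (fun ζ => (M ζ).det) (Metric.ball (0:ℂ) 1) := by
  simp only [Matrix.det_apply']
  exact DifferentiableOn.fun_sum fun σ _ =>
    (differentiableOn_const _).mul (DifferentiableOn.fun_finsetProd fun i _ => hM (σ i) i)

lemma MDiff.aeval {M : ℂ → Matrix (Fin n) (Fin n) ℂ} (hM : MDiff M) (p : ℂ[X]) :
    MDiff (fun ζ => (Polynomial.aeval (M ζ)) p) := by
  have : ∀ ζ, (Polynomial.aeval (M ζ)) p
      = ∑ i ∈ Finset.range (p.natDegree + 1), p.coeff i • M ζ ^ i := by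
    intro ζ
    exact Polynomial.aeval_eq_sum_range (M ζ)
  intro i j
  simp only [this, Matrix.sum_apply]
  exact DifferentiableOn.fun_sum fun k _ => by
    simpa only [Matrix.smul_apply, smul_eq_mul] using
      (differentiableOn_const _).fun_mul (hM.pow k i j)

lemma MDiff.inv {M : ℂ → Matrix (Fin n) (Fin n) ℂ} (hM : MDiff M)
    (hdet : ∀ ζ ∈ Metric.ball (0:ℂ) 1, (M ζ).det ≠ 0) :
    MDiff (fun ζ => (M ζ)⁻¹) := by
  intro i j
  have hrw : ∀ ζ, (M ζ)⁻¹ i j = ((M ζ).det)⁻¹ * (M ζ).adjugate i j := by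
    intro ζ
    rw [Matrix.inv_def, Ring.inverse_eq_inv, Matrix.smul_apply, smul_eq_mul]
  simp only [hrw, Matrix.adjugate_apply]
  refine (hM.det.inv hdet).mul (MDiff.det (M := fun ζ => (M ζ).updateRow j (Pi.single i 1)) ?_)
  intro a b
  by_cases hab : a = j
  · subst hab
    simp only [Matrix.updateRow_self]
    exact differentiableOn_const _
  · simp only [Matrix.updateRow_ne hab]
    exact hM a b


/-- Coefficient bound for a product of linear factors with bounded roots. -/
lemma coeff_prod_bound (t : ℝ) (ht : 1 ≤ t) :
    ∀ s : Multiset ℂ, (∀ x ∈ s, ‖x‖ ≤ t) →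
      ∀ j, ‖((s.map fun a => X - C a).prod).coeff j‖
        ≤ 2 ^ Multiset.card s * t ^ Multiset.card s := by
  intro s
  induction s using Multiset.induction_on with
  | empty =>
    intro _ j
    simp only [Multiset.map_zero, Multiset.prod_zero, Multiset.card_zero, pow_zero, one_mul]
    rcases Nat.eq_zero_or_pos j with hj | hj
    · subst hj; simp
    · rw [Polynomial.coeff_one, if_neg (by omega)]
      simp
  | cons a s ih =>
    intro hs j
    have ha : ‖a‖ ≤ t := hs a (Multiset.mem_cons_self a s)
    have ih' := ih (fun x hx => hs x (Multiset.mem_cons_of_mem hx))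
    rw [Multiset.map_cons, Multiset.prod_cons, Multiset.card_cons]
    set P := (s.map fun a => X - C a).prod with hP
    have hmul : ((X - C a) * P).coeff j = P.coeff (j - 1) * (if j = 0 then 0 else 1) - a * P.coeff j := by
      rcases Nat.eq_zero_or_pos j with hj | hj
      · subst hj; simp [sub_mul, coeff_C_mul]
      · obtain ⟨m, rfl⟩ := Nat.exists_eq_succ_of_ne_zero (Nat.pos_iff_ne_zero.1 hj)
        rw [sub_mul, Polynomial.coeff_sub, coeff_C_mul, if_neg (by omega), mul_one, X_mul,
          Polynomial.coeff_mul_X]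
        simp
    rw [hmul]
    have hb1 : ‖P.coeff (j-1) * (if j = 0 then 0 else 1)‖ ≤ 2 ^ Multiset.card s * t ^ Multiset.card s := by
      rcases eq_or_ne j 0 with hj | hj
      · simp [hj]
        exact pow_nonneg (le_trans zero_le_one ht) _
      · simp only [if_neg hj, mul_one]
        exact ih' _
    have hb2 : ‖a * P.coeff j‖ ≤ t * (2 ^ Multiset.card s * t ^ Multiset.card s) := by
      rw [norm_mul]
      exact mul_le_mul ha (ih' j) (norm_nonneg _) (le_trans zero_le_one ht)
    calc ‖P.coeff (j-1) * (if j = 0 then 0 else 1) - a * P.coeff j‖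
        ≤ ‖P.coeff (j-1) * (if j = 0 then 0 else 1)‖ + ‖a * P.coeff j‖ := by
          exact (norm_sub_le _ _)
      _ ≤ 2 ^ Multiset.card s * t ^ Multiset.card s + t * (2 ^ Multiset.card s * t ^ Multiset.card s) := by
          linarith
      _ ≤ 2 ^ (Multiset.card s + 1) * t ^ (Multiset.card s + 1) := by
          have h2 : (0:ℝ) < 2 ^ Multiset.card s := by positivity
          have h3 : (1:ℝ) ≤ t ^ Multiset.card s := one_le_pow₀ ht
          have h4 : (0:ℝ) ≤ (t - 1) * (t ^ Multiset.card s * 2 ^ Multiset.card s) :=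
            mul_nonneg (by linarith) (by positivity)
          ring_nf
          nlinarith [h4]


lemma charpoly_coeff_bound (hn : 1 ≤ n) (A : Matrix (Fin n) (Fin n) ℂ) {t : ℝ} (ht : 1 ≤ t)
    (hspec : ∀ x ∈ spectrum ℂ A, ‖x‖ ≤ t) (j : ℕ) :
    ‖(Matrix.charpoly A).coeff j‖ ≤ 2 ^ n * t ^ n := by
  have hmon := Matrix.charpoly_monic A
  have hfac := (IsAlgClosed.splits _).eq_prod_roots_of_monic hmon
  have hcard : Multiset.card (Matrix.charpoly A).roots = n := by
    rw [(Polynomial.splits_iff_card_roots).1 (IsAlgClosed.splits _)]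
    simp [Matrix.charpoly_natDegree_eq_dim]
  have hroots : ∀ x ∈ (Matrix.charpoly A).roots, ‖x‖ ≤ t := by
    intro x hx
    exact hspec x (mem_spectrum_iff_root.2 (Polynomial.isRoot_of_mem_roots hx))
  have := coeff_prod_bound t ht (Matrix.charpoly A).roots hroots j
  rw [hcard] at this
  rw [hfac]
  exact this

lemma cauchy_root_bound {p : ℂ[X]} (hm : p.Monic) {N : ℕ} (hdeg : p.natDegree = N)
    (hN : 1 ≤ N) {B : ℝ} (hB : 1 ≤ B) (hcoeff : ∀ j, j < N → ‖p.coeff j‖ ≤ B)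
    {z : ℂ} (hz : p.eval z = 0) : ‖z‖ ≤ N * B := by
  rcases le_or_gt (‖z‖) 1 with h | h
  · calc ‖z‖ ≤ 1 := h
    _ ≤ (N:ℝ) * B := by
        have : (1:ℝ) ≤ (N:ℝ) := by exact_mod_cast hN
        nlinarith
  · have hcN : p.coeff N = 1 := by rw [← hdeg]; exact hm.coeff_natDegree
    have h1 : z ^ N = -∑ i ∈ Finset.range N, p.coeff i * z ^ i := by
      have he := Polynomial.eval_eq_sum_range (p := p) z
      rw [hdeg, Finset.sum_range_succ, hcN, one_mul, hz] at he
      linear_combination -he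
    have habs1 : (1:ℝ) ≤ ‖z‖ := le_of_lt h
    have h2 : ‖z‖ ^ N ≤ (N * B) * ‖z‖ ^ (N - 1) := by
      calc ‖z‖ ^ N = ‖z ^ N‖ := (norm_pow _ _).symm
        _ = ‖∑ i ∈ Finset.range N, p.coeff i * z ^ i‖ := by
            rw [h1, norm_neg]
        _ ≤ ∑ i ∈ Finset.range N, ‖p.coeff i * z ^ i‖ :=
            norm_sum_le _ _
        _ ≤ ∑ _i ∈ Finset.range N, B * ‖z‖ ^ (N - 1) := by
            refine Finset.sum_le_sum fun i hi => ?_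
            have hi' := Finset.mem_range.1 hi
            rw [norm_mul, norm_pow]
            refine mul_le_mul (hcoeff i hi') ?_ (by positivity)
              (by linarith)
            exact pow_le_pow_right₀ habs1 (by omega)
        _ = (N * B) * ‖z‖ ^ (N - 1) := by
            rw [Finset.sum_const, Finset.card_range, nsmul_eq_mul]; ring
    have hsplit : ‖z‖ ^ N = ‖z‖ ^ (N - 1) * ‖z‖ := by
      rw [← pow_succ]
      congr 1
      omega
    have hpos : (0:ℝ) < ‖z‖ ^ (N - 1) := by positivity
    rw [hsplit] at h2
    nlinarith


lemma diffOn_dslope_ball {f : ℂ → ℂ} {a : ℂ} (ha : a ∈ Metric.ball (0:ℂ) 1)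
    (hf : DifferentiableOn ℂ f (Metric.ball (0:ℂ) 1)) :
    DifferentiableOn ℂ (dslope f a) (Metric.ball (0:ℂ) 1) := by
  intro x hx
  rcases eq_or_ne x a with rfl | hne
  · obtain ⟨p, hp⟩ := hf.analyticAt (IsOpen.mem_nhds isOpen_ball ha)
    exact ((hp.has_fpower_series_dslope_fslope).analyticAt.differentiableAt).differentiableWithinAt
  · exact (differentiableWithinAt_dslope_of_ne hne).2 (hf x hx)

set_option maxHeartbeats 2000000 in
lemma globevnik (hn : 1 ≤ n) {H : ℂ → Matrix (Fin n) (Fin n) ℂ}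
    (hd : MDiff H)
    (hs : ∀ ζ ∈ Metric.ball (0:ℂ) 1, ∀ η ∈ spectrum ℂ (H ζ), ‖η‖ ≤ 1)
    {ζ₁ ζ₂ : ℂ} (h1 : ζ₁ ∈ Metric.ball (0:ℂ) 1) (h2 : ζ₂ ∈ Metric.ball (0:ℂ) 1)
    (hH1 : H ζ₁ = 0) {ν : ℂ} (hν : ν ∈ spectrum ℂ (H ζ₂)) :
    ‖ν‖ ≤ pseudoDist ζ₂ ζ₁ := by
  have hn0 : n ≠ 0 := by omega
  rw [mem_ball_zero_iff] at h1 h2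
  rcases eq_or_ne ζ₂ ζ₁ with rfl | hne
  · -- degenerate case
    rw [hH1, mem_spectrum_iff_det, sub_zero, Matrix.det_smul, Matrix.det_one, mul_one] at hν
    rw [Fintype.card_fin] at hν
    rw [pow_eq_zero_iff hn0] at hν
    rw [hν, norm_zero]
    exact norm_nonneg _
  -- set-up
  set b : ℂ → ℂ := fun ζ => (ζ - ζ₁) / (1 - (starRingEnd ℂ) ζ₁ * ζ) with hbdef
  have hdenom : ∀ ζ : ℂ, ‖ζ‖ < 1 → 1 - (starRingEnd ℂ) ζ₁ * ζ ≠ 0 :=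
    fun ζ hζ => one_sub_conj_mul_ne_zero hζ h1
  have hb2 : b ζ₂ ≠ 0 := div_ne_zero (sub_ne_zero.2 hne) (hdenom ζ₂ h2)
  set K : ℂ → Matrix (Fin n) (Fin n) ℂ :=
    fun ζ => Matrix.of fun i j =>
      dslope (fun z => H z i j) ζ₁ ζ * (1 - (starRingEnd ℂ) ζ₁ * ζ) with hKdef
  have hKd : MDiff K := by
    intro i j
    exact (diffOn_dslope_ball (by simpa [mem_ball_zero_iff] using h1) (hd i j)).mul
      ((differentiableOn_const _).sub ((differentiableOn_const _).mul differentiableOn_id))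
  have hHbK : ∀ ζ : ℂ, ‖ζ‖ < 1 → ζ ≠ ζ₁ → H ζ = b ζ • K ζ := by
    intro ζ hζab hζ
    ext i j
    have h0 : H ζ₁ i j = 0 := by rw [hH1]; rfl
    have : dslope (fun z => H z i j) ζ₁ ζ = (H ζ i j - H ζ₁ i j) / (ζ - ζ₁) := by
      rw [dslope_of_ne _ hζ, slope_def_field]
    rw [Matrix.smul_apply, hKdef]
    simp only [Matrix.of_apply]
    rw [this, h0, sub_zero, hbdef]
    have hζζ₁ : ζ - ζ₁ ≠ 0 := sub_ne_zero.2 hζ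
    have hd0 := hdenom ζ hζab
    have hd0' : 1 - ζ * (starRingEnd ℂ) ζ₁ ≠ 0 := by rwa [mul_comm]
    simp only [smul_eq_mul]
    field_simp
  -- spectrum of K on the disc away from ζ₁
  have hKspec : ∀ ζ : ℂ, ‖ζ‖ < 1 → ζ ≠ ζ₁ →
      ∀ η ∈ spectrum ℂ (K ζ), ‖η‖ ≤ 1 / ‖b ζ‖ := by
    intro ζ hζ hζ1 η hη
    have hbζ : b ζ ≠ 0 := div_ne_zero (sub_ne_zero.2 hζ1) (hdenom ζ hζ)
    have hdet : (η • (1 : Matrix (Fin n) (Fin n) ℂ) - K ζ).det = 0 := mem_spectrum_iff_det.1 hη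
    have hmem : b ζ * η ∈ spectrum ℂ (H ζ) := by
      rw [mem_spectrum_iff_det, hHbK ζ hζ hζ1]
      have : (b ζ * η) • (1 : Matrix (Fin n) (Fin n) ℂ) - b ζ • K ζ
          = b ζ • (η • (1 : Matrix (Fin n) (Fin n) ℂ) - K ζ) := by
        rw [smul_sub, smul_smul]
      rw [this, Matrix.det_smul, hdet, mul_zero]
    have := hs ζ (by simpa [mem_ball_zero_iff] using hζ) _ hmem
    rw [norm_mul] at this
    have hbpos : 0 < ‖b ζ‖ := norm_pos_iff.2 hbζ
    rw [le_div_iff₀ hbpos]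
    calc ‖η‖ * ‖b ζ‖ = ‖b ζ‖ * ‖η‖ := mul_comm _ _
      _ ≤ 1 := this
  -- μ is an eigenvalue of K ζ₂
  set μ : ℂ := ν / b ζ₂ with hμdef
  have hνbμ : ν = b ζ₂ * μ := by rw [hμdef]; field_simp
  have hμK : μ ∈ spectrum ℂ (K ζ₂) := by
    rw [mem_spectrum_iff_det]
    have hdet : (ν • (1 : Matrix (Fin n) (Fin n) ℂ) - H ζ₂).det = 0 := mem_spectrum_iff_det.1 hν
    rw [hHbK ζ₂ h2 hne] at hdet
    have : ν • (1 : Matrix (Fin n) (Fin n) ℂ) - b ζ₂ • K ζ₂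
        = b ζ₂ • (μ • (1 : Matrix (Fin n) (Fin n) ℂ) - K ζ₂) := by
      rw [smul_sub, smul_smul, ← hνbμ]
    rw [this, Matrix.det_smul] at hdet
    exact (mul_eq_zero.1 hdet).resolve_left (pow_ne_zero _ hb2)
  -- fix c < 1
  have hstep : ∀ c : ℝ, 0 < c → c < 1 → ‖ν‖ * c ^ n ≤ ‖b ζ₂‖ := by
    intro c hc0 hc1
    set r1 := ‖ζ₁‖ with hr1
    set r0 := max (‖ζ₁‖) (‖ζ₂‖) with hr0
    have hr00 : 0 ≤ r0 := le_trans (norm_nonneg ζ₁) (le_max_left _ _)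
    have hr01 : r0 < 1 := max_lt h1 h2
    have hr10 : 0 ≤ r1 := norm_nonneg _
    have hr11 : r1 < 1 := h1
    set D : ℝ := 2 / (1 - r1)^2 with hD
    have hDpos : 0 < D := by
      have : (0:ℝ) < (1 - r1)^2 := by nlinarith
      positivity
    set ρ : ℝ := Real.sqrt (max (1 - (1 - c^2)/D) ((1 + r0^2)/2)) with hρ
    have hargpos : 0 < max (1 - (1 - c^2)/D) ((1 + r0^2)/2) :=
      lt_of_lt_of_le (by positivity) (le_max_right _ _)
    have hρsq : ρ^2 = max (1 - (1 - c^2)/D) ((1 + r0^2)/2) := Real.sq_sqrt hargpos.le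
    have hρpos : 0 < ρ := Real.sqrt_pos.2 hargpos
    have harglt1 : max (1 - (1 - c^2)/D) ((1 + r0^2)/2) < 1 := by
      refine max_lt ?_ (by nlinarith)
      have : 0 < (1 - c^2)/D := div_pos (by nlinarith) hDpos
      linarith
    have hρlt1 : ρ < 1 := by nlinarith [hρsq, hρpos]
    have hρgtr0 : r0 < ρ := by
      have h5 : (1 + r0^2)/2 ≤ ρ^2 := hρsq ▸ le_max_right _ _
      nlinarith
    have hζ₁ρ : ‖ζ₁‖ < ρ := lt_of_le_of_lt (le_max_left _ _) hρgtr0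
    have hζ₂ρ : ‖ζ₂‖ < ρ := lt_of_le_of_lt (le_max_right _ _) hρgtr0
    clear_value r1 r0 D ρ
    have hsphere : ∀ ζ : ℂ, ‖ζ‖ = ρ → c ≤ ‖b ζ‖ := by
      intro ζ hζρ
      have hζlt1 : ‖ζ‖ < 1 := by rw [hζρ]; exact hρlt1
      have hA1 : 1 - r1 ≤ ‖1 - (starRingEnd ℂ) ζ₁ * ζ‖ := by
        have hns := norm_sub_norm_le (1 : ℂ) ((starRingEnd ℂ) ζ₁ * ζ)
        simp only [norm_one, norm_mul, Complex.norm_conj] at hns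
        rw [hζρ] at hns
        nlinarith
      have hApos : 0 < ‖1 - (starRingEnd ℂ) ζ₁ * ζ‖ := by linarith
      have hkey := key_identity ζ ζ₁
      rw [hζρ] at hkey
      have habsb : ‖b ζ‖
          = ‖ζ - ζ₁‖ / ‖1 - (starRingEnd ℂ) ζ₁ * ζ‖ := norm_div _ _
      rw [habsb, le_div_iff₀ hApos]
      have hmax1 : 1 - (1 - c^2)/D ≤ ρ^2 := hρsq ▸ le_max_left _ _
      have e2 : (1 - c^2)/D = (1 - c^2)*(1 - r1)^2/2 := by
        rw [hD, div_div_eq_mul_div]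
      rw [← hr1] at hkey
      have f3 : 0 ≤ 1 - ρ^2 := by linarith [pow_le_one₀ hρpos.le hρlt1.le (n := 2)]
      have f4 : 1 - ρ^2 ≤ (1 - c^2)*(1 - r1)^2/2 := by rw [← e2]; linarith
      have e3 : (1 - ρ^2) * (1 - r1^2) ≤ (1 - c^2)*(1 - r1)^2 := by
        have f1 : 0 ≤ 1 - r1^2 := by nlinarith
        have f2 : 1 - r1^2 ≤ 2 := by nlinarith
        have := mul_le_mul f4 f2 f1 (div_nonneg (mul_nonneg (by nlinarith) (sq_nonneg _)) (by norm_num))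
        linarith [this]
      have e4 : (1 - c^2)*(1 - r1)^2 ≤ (1 - c^2) * ‖1 - (starRingEnd ℂ) ζ₁ * ζ‖^2 := by
        refine mul_le_mul_of_nonneg_left ?_ (by nlinarith)
        exact pow_le_pow_left₀ (by linarith) hA1 2
      have hsq : (c * ‖1 - (starRingEnd ℂ) ζ₁ * ζ‖)^2 ≤ ‖ζ - ζ₁‖^2 := by
        have expand : (c * ‖1 - (starRingEnd ℂ) ζ₁ * ζ‖)^2
            = ‖1 - (starRingEnd ℂ) ζ₁ * ζ‖^2
              - (1 - c^2) * ‖1 - (starRingEnd ℂ) ζ₁ * ζ‖^2 := by ring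
        rw [expand]
        linarith [hkey, e3, e4]
      exact le_of_pow_le_pow_left₀ two_ne_zero (norm_nonneg _) hsq
    -- interpolation representation of coefficients
    set T : Finset ℂ := (Finset.range (n+1)).image (fun i : ℕ => (i:ℂ)) with hT
    have hTcard : T.card = n + 1 := by
      rw [hT, Finset.card_image_of_injective _ Nat.cast_injective, Finset.card_range]
    have hinj : Set.InjOn id (T : Set ℂ) := fun x _ y _ h => h
    have hcoeffrep : ∀ (k j : ℕ) (ζ : ℂ), (Matrix.charpoly (K ζ ^ k)).coeff j
        = ∑ x ∈ T, ((x • (1 : Matrix (Fin n) (Fin n) ℂ) - K ζ ^ k).det)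
            * (Lagrange.basis T id x).coeff j := by
      intro k j ζ
      have hdeg : (Matrix.charpoly (K ζ ^ k)).degree < T.card := by
        rw [hTcard, Matrix.charpoly_degree_eq_dim, Fintype.card_fin]
        exact_mod_cast Nat.lt_succ_self n
      have hrep := Lagrange.eq_interpolate (v := id) hinj hdeg
      conv_lhs => rw [hrep]
      rw [Lagrange.interpolate_apply, Polynomial.finset_sum_coeff]
      refine Finset.sum_congr rfl fun x hx => ?_
      rw [Polynomial.coeff_C_mul]
      congr 1
      simp only [id]
      exact eval_charpoly _ _
    have hdiffc : ∀ (k j : ℕ), DifferentiableOn ℂ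
        (fun ζ => (Matrix.charpoly (K ζ ^ k)).coeff j) (Metric.ball (0:ℂ) 1) := by
      intro k j
      have hdiff0 : DifferentiableOn ℂ
          (fun ζ => ∑ x ∈ T, ((x • (1 : Matrix (Fin n) (Fin n) ℂ) - K ζ ^ k).det)
            * (Lagrange.basis T id x).coeff j) (Metric.ball (0:ℂ) 1) :=
        DifferentiableOn.fun_sum fun x _ =>
          (MDiff.det ((MDiff.const (x • (1 : Matrix (Fin n) (Fin n) ℂ))).sub (hKd.pow k))).mul
            (differentiableOn_const _)
      exact hdiff0.congr (fun ζ _ => hcoeffrep k j ζ)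
    have honec : (1:ℝ) ≤ 1/c := one_le_one_div hc0 hc1.le
    have hB1 : ∀ k : ℕ, (1:ℝ) ≤ 2^n * (1/c)^(k*n) := by
      intro k
      calc (1:ℝ) = 1 * 1 := (one_mul 1).symm
        _ ≤ 2^n * (1/c)^(k*n) :=
          mul_le_mul (one_le_pow₀ (by norm_num)) (one_le_pow₀ honec) zero_le_one (by positivity)
    have hkbound : ∀ k : ℕ, 1 ≤ k → ‖μ‖ ^ k ≤ n * (2^n * (1/c)^(k*n)) := by
      intro k hk
      have hmax : ∀ j, ‖(Matrix.charpoly (K ζ₂ ^ k)).coeff j‖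
          ≤ 2^n * (1/c)^(k*n) := by
        intro j
        have hfront : ∀ ζ ∈ frontier (Metric.ball (0:ℂ) ρ),
            ‖(Matrix.charpoly (K ζ ^ k)).coeff j‖ ≤ 2^n * (1/c)^(k*n) := by
          intro ζ hζf
          rw [frontier_ball _ (ne_of_gt hρpos)] at hζf
          rw [mem_sphere_zero_iff_norm] at hζf
          have hζlt1 : ‖ζ‖ < 1 := by rw [hζf]; exact hρlt1
          have hζne : ζ ≠ ζ₁ := by
            intro hcon
            rw [hcon] at hζf
            exact absurd hζf (ne_of_lt hζ₁ρ)
          have hspeck : ∀ x ∈ spectrum ℂ (K ζ ^ k), ‖x‖ ≤ (1/c)^k := by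
            intro x hx
            rw [spectrum.map_pow_of_pos _ (by omega : 0 < k)] at hx
            obtain ⟨η, hη, rfl⟩ := hx
            rw [norm_pow]
            refine pow_le_pow_left₀ (norm_nonneg _) ?_ k
            calc ‖η‖ ≤ 1 / ‖b ζ‖ := hKspec ζ hζlt1 hζne η hη
              _ ≤ 1 / c := one_div_le_one_div_of_le hc0 (hsphere ζ hζf)
          have hcb := charpoly_coeff_bound hn (K ζ ^ k) (one_le_pow₀ honec) hspeck j
          rw [← pow_mul] at hcb
          exact hcb
        have hdc : DiffContOnCl ℂ (fun ζ => (Matrix.charpoly (K ζ ^ k)).coeff j)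
            (Metric.ball (0:ℂ) ρ) := by
          constructor
          · exact (hdiffc k j).mono (Metric.ball_subset_ball hρlt1.le)
          · rw [closure_ball _ (ne_of_gt hρpos)]
            exact ((hdiffc k j).continuousOn).mono (Metric.closedBall_subset_ball hρlt1)
        have hmm := Complex.norm_le_of_forall_mem_frontier_norm_le isBounded_ball hdc hfront
          (z := ζ₂) (subset_closure (mem_ball_zero_iff.2
            hζ₂ρ))
        exact hmm
      have hroot : (Matrix.charpoly (K ζ₂ ^ k)).eval (μ ^ k) = 0 := by
        have hmem : μ ^ k ∈ spectrum ℂ (K ζ₂ ^ k) := by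
          rw [spectrum.map_pow_of_pos _ (by omega : 0 < k)]
          exact ⟨μ, hμK, rfl⟩
        exact mem_spectrum_iff_root.1 hmem
      have hcr := cauchy_root_bound (Matrix.charpoly_monic _)
        (by rw [Matrix.charpoly_natDegree_eq_dim, Fintype.card_fin]) hn (hB1 k)
        (fun j _ => hmax j) hroot
      rwa [norm_pow] at hcr
    have hxk : ∀ k : ℕ, 1 ≤ k → (‖μ‖ * c^n)^k ≤ n * 2^n := by
      intro k hk
      have h := hkbound k hk
      have hcancel : ((1:ℝ)/c)^(k*n) * c^(n*k) = 1 := by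
        rw [one_div, inv_pow, mul_comm n k, inv_mul_cancel₀ (pow_ne_zero _ (ne_of_gt hc0))]
      have hmul : ‖μ‖ ^ k * c^(n*k) ≤ n * (2^n * (1/c)^(k*n)) * c^(n*k) :=
        mul_le_mul_of_nonneg_right h (by positivity)
      calc (‖μ‖ * c^n)^k = ‖μ‖ ^ k * c^(n*k) := by
            rw [mul_pow, ← pow_mul]
        _ ≤ n * (2^n * (1/c)^(k*n)) * c^(n*k) := hmul
        _ = n * 2^n * (((1:ℝ)/c)^(k*n) * c^(n*k)) := by ring
        _ = n * 2^n := by rw [hcancel, mul_one]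
    have hle1 : ‖μ‖ * c^n ≤ 1 := by
      by_contra hgt
      push_neg at hgt
      obtain ⟨k, hk1, hk2⟩ :=
        (((tendsto_pow_atTop_atTop_of_one_lt hgt).eventually_gt_atTop
          ((n:ℝ) * 2^n)).and (Filter.eventually_ge_atTop 1)).exists
      exact absurd (hxk k hk2) (not_le.2 hk1)
    have habsν : ‖ν‖ = ‖b ζ₂‖ * ‖μ‖ := by
      rw [hνbμ, norm_mul]
    rw [habsν]
    calc ‖b ζ₂‖ * ‖μ‖ * c^n
        = ‖b ζ₂‖ * (‖μ‖ * c^n) := by ring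
      _ ≤ ‖b ζ₂‖ * 1 := mul_le_mul_of_nonneg_left hle1 (norm_nonneg _)
      _ = ‖b ζ₂‖ := mul_one _
  -- limit c → 1
  have htends : Filter.Tendsto (fun c : ℝ => ‖ν‖ * c ^ n) (nhdsWithin 1 (Set.Iio 1))
      (nhds (‖ν‖ * 1 ^ n)) :=
    ((continuous_const.mul (continuous_pow n)).tendsto 1).mono_left nhdsWithin_le_nhds
  have hfinal : ‖ν‖ * 1 ^ n ≤ ‖b ζ₂‖ := by
    refine le_of_tendsto htends ?_
    filter_upwards [Filter.mem_of_superset (Ioo_mem_nhdsLT_of_mem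
      (show (1:ℝ) ∈ Set.Ioc 0 1 from ⟨zero_lt_one, le_refl 1⟩)) (by exact fun x hx => hx)]
      with c hc
    exact hstep c hc.1 hc.2
  rw [one_pow, mul_one] at hfinal
  calc ‖ν‖ ≤ ‖b ζ₂‖ := hfinal
    _ = pseudoDist ζ₂ ζ₁ := rfl


lemma pow_mulVec {A : Matrix (Fin n) (Fin n) ℂ} {v : Fin n → ℂ} {μ : ℂ}
    (h : A *ᵥ v = μ • v) (k : ℕ) : (A ^ k) *ᵥ v = (μ ^ k) • v := by
  induction k with
  | zero => simp [Matrix.one_mulVec]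
  | succ k ih =>
    rw [pow_succ, ← Matrix.mulVec_mulVec, h, Matrix.mulVec_smul, ih, smul_smul, pow_succ,
      mul_comm]

lemma aeval_mulVec {A : Matrix (Fin n) (Fin n) ℂ} {v : Fin n → ℂ} {μ : ℂ}
    (h : A *ᵥ v = μ • v) (q : ℂ[X]) :
    (Polynomial.aeval A) q *ᵥ v = q.eval μ • v := by
  induction q using Polynomial.induction_on' with
  | add f g hf hg => rw [map_add, Matrix.add_mulVec, hf, hg, eval_add, add_smul]
  | monomial k a =>
    rw [aeval_monomial, eval_monomial]
    rw [Algebra.algebraMap_eq_smul_one, smul_mul_assoc, one_mul, Matrix.smul_mulVec,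
      pow_mulVec h k, smul_smul]

lemma master (hn : 2 ≤ n)
    (F : ℂ → Matrix (Fin n) (Fin n) ℂ)
    (hol : ∀ i j, DifferentiableOn ℂ (fun ζ => F ζ i j) (Metric.ball (0 : ℂ) 1))
    (hrange : ∀ ζ ∈ Metric.ball (0 : ℂ) 1, specRad (F ζ) < 1)
    (ζ₁ ζ₂ : ℂ) (hζ₁ : ζ₁ ∈ Metric.ball (0 : ℂ) 1) (hζ₂ : ζ₂ ∈ Metric.ball (0 : ℂ) 1) :
    ∀ μ ∈ spectrum ℂ (F ζ₂),
      ∏ l ∈ (minpoly ℂ (F ζ₁)).roots.toFinset,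
        pseudoDist μ l ^ ((minpoly ℂ (F ζ₁)).rootMultiplicity l) ≤ pseudoDist ζ₁ ζ₂ := by
  have hn1 : 1 ≤ n := by omega
  haveI : Nonempty (Fin n) := ⟨⟨0, by omega⟩⟩
  intro μ hμ
  have hspecsmall : ∀ ζ ∈ Metric.ball (0:ℂ) 1, ∀ x ∈ spectrum ℂ (F ζ), ‖x‖ < 1 :=
    fun ζ hζ x hx => abs_lt_one_of_specRad (hrange ζ hζ) hx
  have hμ1 : ‖μ‖ < 1 := hspecsmall ζ₂ hζ₂ μ hμ
  have hint : IsIntegral ℂ (F ζ₁) := IsIntegral.of_finite ℂ (F ζ₁)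
  have hpmon : (minpoly ℂ (F ζ₁)).Monic := minpoly.monic hint
  set p := minpoly ℂ (F ζ₁) with hp
  set T := p.roots.toFinset with hT
  set m : ℂ → ℕ := fun l => p.rootMultiplicity l with hm
  have hTspec : ∀ l ∈ T, l ∈ spectrum ℂ (F ζ₁) := by
    intro l hl
    rw [hT, Multiset.mem_toFinset] at hl
    have hroot : p.IsRoot l := isRoot_of_mem_roots hl
    have hdvd : p ∣ Matrix.charpoly (F ζ₁) := minpoly.dvd ℂ (F ζ₁) (Matrix.aeval_self_charpoly _)
    exact mem_spectrum_iff_root.2 (hroot.dvd hdvd)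
  have hTlt : ∀ l ∈ T, ‖l‖ < 1 := fun l hl => hspecsmall ζ₁ hζ₁ l (hTspec l hl)
  have hpfac : p = ∏ l ∈ T, (X - C l) ^ (m l) := by
    have h1 := (IsAlgClosed.splits p).eq_prod_roots_of_monic hpmon
    rw [h1]
    exact Polynomial.prod_multiset_root_eq_finset_root
  set s : ℂ[X] := ∏ l ∈ T, (1 - C ((starRingEnd ℂ) l) * X) ^ (m l) with hs
  have hpev : ∀ z : ℂ, p.eval z = ∏ l ∈ T, (z - l) ^ (m l) := by
    intro z
    conv_lhs => rw [hpfac]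
    rw [eval_prod]
    exact Finset.prod_congr rfl fun l _ => by rw [eval_pow, eval_sub, eval_X, eval_C]
  have hsev : ∀ z : ℂ, s.eval z = ∏ l ∈ T, (1 - (starRingEnd ℂ) l * z) ^ (m l) := by
    intro z
    rw [hs, eval_prod]
    exact Finset.prod_congr rfl fun l _ => by
      rw [eval_pow, eval_sub, eval_one, eval_mul, eval_C, eval_X]
  have hseval : ∀ z : ℂ, ‖z‖ < 1 → s.eval z ≠ 0 := by
    intro z hz
    rw [hsev]
    exact Finset.prod_ne_zero_iff.2 fun l hl =>
      pow_ne_zero _ (one_sub_conj_mul_ne_zero hz (hTlt l hl))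
  set S : ℂ → Matrix (Fin n) (Fin n) ℂ := fun ζ => (Polynomial.aeval (F ζ)) s with hS
  set P : ℂ → Matrix (Fin n) (Fin n) ℂ := fun ζ => (Polynomial.aeval (F ζ)) p with hP
  have hspecnon : ∀ ζ : ℂ, (spectrum ℂ (F ζ)).Nonempty := fun ζ =>
    spectrum.nonempty_of_isAlgClosed_of_finiteDimensional ℂ (F ζ)
  have hSdet : ∀ ζ ∈ Metric.ball (0:ℂ) 1, (S ζ).det ≠ 0 := by
    intro ζ hζ hdet0
    have h0 : (0:ℂ) ∈ spectrum ℂ ((Polynomial.aeval (F ζ)) s) := by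
      rw [mem_spectrum_iff_det, zero_smul, zero_sub, Matrix.det_neg]
      rw [show ((Polynomial.aeval (F ζ)) s).det = (S ζ).det from rfl, hdet0, mul_zero]
    rw [spectrum.map_polynomial_aeval_of_nonempty (F ζ) s (hspecnon ζ)] at h0
    obtain ⟨x, hx, hx0⟩ := h0
    exact hseval x (hspecsmall ζ hζ x hx) hx0
  set G : ℂ → Matrix (Fin n) (Fin n) ℂ := fun ζ => P ζ * (S ζ)⁻¹ with hG
  have hFd : MDiff F := fun i j => hol i j
  have hGd : MDiff G := (hFd.aeval p).mul ((hFd.aeval s).inv hSdet)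
  have hGspec : ∀ ζ ∈ Metric.ball (0:ℂ) 1, ∀ η ∈ spectrum ℂ (G ζ), ‖η‖ ≤ 1 := by
    intro ζ hζ η hη
    have hdetGη : (η • (1:Matrix (Fin n) (Fin n) ℂ) - G ζ).det = 0 := mem_spectrum_iff_det.1 hη
    have hSunit : IsUnit (S ζ).det := isUnit_iff_ne_zero.2 (hSdet ζ hζ)
    have hfact : η • (1:Matrix (Fin n) (Fin n) ℂ) - G ζ = (η • S ζ - P ζ) * (S ζ)⁻¹ := by
      rw [hG, sub_mul, smul_mul_assoc, Matrix.mul_nonsing_inv _ hSunit]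
    have hdet2 : (η • S ζ - P ζ).det = 0 := by
      by_contra hd
      rw [hfact, Matrix.det_mul] at hdetGη
      have hinvdet : (S ζ)⁻¹.det ≠ 0 := by
        rw [Matrix.det_nonsing_inv, Ring.inverse_eq_inv]
        exact inv_ne_zero (hSdet ζ hζ)
      exact (mul_ne_zero hd hinvdet) hdetGη
    have h0 : (0:ℂ) ∈ spectrum ℂ ((Polynomial.aeval (F ζ)) (η • s - p)) := by
      rw [map_sub, map_smul, mem_spectrum_iff_det, zero_smul, zero_sub, Matrix.det_neg]
      rw [show ((η • (Polynomial.aeval (F ζ)) s - (Polynomial.aeval (F ζ)) p)).det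
        = (η • S ζ - P ζ).det from rfl, hdet2, mul_zero]
    rw [spectrum.map_polynomial_aeval_of_nonempty (F ζ) _ (hspecnon ζ)] at h0
    obtain ⟨x, hx, hx0⟩ := h0
    have hx1 : ‖x‖ < 1 := hspecsmall ζ hζ x hx
    simp only [eval_sub, eval_smul, smul_eq_mul] at hx0
    have hsx : s.eval x ≠ 0 := hseval x hx1
    have hη_eq : η = p.eval x / s.eval x := by
      field_simp
      linear_combination hx0
    rw [hη_eq, norm_div, div_le_one (norm_pos_iff.2 hsx)]
    rw [hpev, hsev, norm_prod, norm_prod]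
    refine Finset.prod_le_prod (fun l _ => by positivity) (fun l hl => ?_)
    rw [norm_pow, norm_pow]
    exact pow_le_pow_left₀ (norm_nonneg _)
      (abs_sub_le_abs_one_sub hx1 (hTlt l hl)) _
  have hG1 : G ζ₁ = 0 := by
    have hP1 : P ζ₁ = 0 := minpoly.aeval ℂ (F ζ₁)
    show P ζ₁ * (S ζ₁)⁻¹ = 0
    rw [hP1, zero_mul]
  have hdetμ : (μ • (1:Matrix (Fin n) (Fin n) ℂ) - F ζ₂).det = 0 := mem_spectrum_iff_det.1 hμ
  obtain ⟨v, hv0, hv⟩ := (Matrix.exists_mulVec_eq_zero_iff).2 hdetμ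
  have hvF : (F ζ₂) *ᵥ v = μ • v := by
    rw [Matrix.sub_mulVec, Matrix.smul_mulVec, Matrix.one_mulVec] at hv
    exact (sub_eq_zero.1 hv).symm
  have hSv : (S ζ₂) *ᵥ v = s.eval μ • v := aeval_mulVec hvF s
  have hPv : (P ζ₂) *ᵥ v = p.eval μ • v := aeval_mulVec hvF p
  have hsμ : s.eval μ ≠ 0 := hseval μ hμ1
  have hSunit₂ : IsUnit (S ζ₂).det := isUnit_iff_ne_zero.2 (hSdet ζ₂ hζ₂)
  have hSinv : (S ζ₂)⁻¹ *ᵥ v = (s.eval μ)⁻¹ • v := by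
    have h1 : (S ζ₂)⁻¹ *ᵥ ((S ζ₂) *ᵥ v) = v := by
      rw [Matrix.mulVec_mulVec, Matrix.nonsing_inv_mul _ hSunit₂, Matrix.one_mulVec]
    rw [hSv, Matrix.mulVec_smul] at h1
    calc (S ζ₂)⁻¹ *ᵥ v
        = (s.eval μ)⁻¹ • (s.eval μ • ((S ζ₂)⁻¹ *ᵥ v)) := by
          rw [smul_smul, inv_mul_cancel₀ hsμ, one_smul]
      _ = (s.eval μ)⁻¹ • v := by rw [h1]
  set η₀ : ℂ := p.eval μ * (s.eval μ)⁻¹ with hη₀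
  have hGv : (G ζ₂) *ᵥ v = η₀ • v := by
    show (P ζ₂ * (S ζ₂)⁻¹) *ᵥ v = η₀ • v
    rw [← Matrix.mulVec_mulVec, hSinv, Matrix.mulVec_smul, hPv, smul_smul, hη₀, mul_comm]
  have hη₀spec : η₀ ∈ spectrum ℂ (G ζ₂) := by
    rw [mem_spectrum_iff_det, ← Matrix.exists_mulVec_eq_zero_iff]
    exact ⟨v, hv0, by
      rw [Matrix.sub_mulVec, Matrix.smul_mulVec, Matrix.one_mulVec, hGv, sub_self]⟩
  have hglob := globevnik hn1 hGd hGspec hζ₁ hζ₂ hG1 hη₀spec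
  have hLHS : ∏ l ∈ T, pseudoDist μ l ^ (m l) = ‖η₀‖ := by
    rw [hη₀, norm_mul, norm_inv, hpev, hsev, norm_prod, norm_prod]
    rw [← Finset.prod_inv_distrib, ← Finset.prod_mul_distrib]
    refine Finset.prod_congr rfl fun l hl => ?_
    rw [norm_pow, norm_pow, ← inv_pow, ← mul_pow]
    congr 1
    rw [pseudoDist, norm_div]
    rw [div_eq_mul_inv]
  rw [hLHS]
  rw [pseudoDist_symm]
  exact hglob

end SSUB

/-- Schwarz lemma for the spectral unit ball: for holomorphic F : 𝔻 → Ω_n (n ≥ 2),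
with W_j = F(ζ_j), both quantities
max_{μ∈σ(W₂)} ∏_{λ∈σ(W₁)} M(μ,λ)^{m(λ)} and max_{λ∈σ(W₁)} ∏_{μ∈σ(W₂)} M(λ,μ)^{m(μ)}
are bounded by the pseudohyperbolic distance between ζ₁ and ζ₂, where m(·) denotes
multiplicity in the relevant minimal polynomial. -/
theorem schwarz_spectral_unit_ball {n : ℕ} (hn : 2 ≤ n)
    (F : ℂ → Matrix (Fin n) (Fin n) ℂ)
    (hol : ∀ i j, DifferentiableOn ℂ (fun ζ => F ζ i j) (Metric.ball (0 : ℂ) 1))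
    (hrange : ∀ ζ ∈ Metric.ball (0 : ℂ) 1, specRad (F ζ) < 1)
    (ζ₁ ζ₂ : ℂ) (hζ₁ : ζ₁ ∈ Metric.ball (0 : ℂ) 1) (hζ₂ : ζ₂ ∈ Metric.ball (0 : ℂ) 1) :
    (∀ μ ∈ spectrum ℂ (F ζ₂),
      ∏ l ∈ (minpoly ℂ (F ζ₁)).roots.toFinset,
        pseudoDist μ l ^ ((minpoly ℂ (F ζ₁)).rootMultiplicity l) ≤ pseudoDist ζ₁ ζ₂) ∧
    (∀ l ∈ spectrum ℂ (F ζ₁),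
      ∏ μ ∈ (minpoly ℂ (F ζ₂)).roots.toFinset,
        pseudoDist l μ ^ ((minpoly ℂ (F ζ₂)).rootMultiplicity μ) ≤ pseudoDist ζ₁ ζ₂) := by
  constructor
  · exact SSUB.master hn F hol hrange ζ₁ ζ₂ hζ₁ hζ₂
  · intro l hl
    have h := SSUB.master hn F hol hrange ζ₂ ζ₁ hζ₂ hζ₁ l hl
    rwa [SSUB.pseudoDist_symm ζ₂ ζ₁] at h
end

section
/- Let A be a complex unital Banach algebra and f : 𝔻 → A holomorphic. Suppose there is R₀ ∈ (0,1) such that for every R ∈ (R₀, 1) and every ζ with |ζ| = R, the spectral radius satisfies r(f(ζ)) < 1/R. Then r(f(ζ)) ≤ 1 for all ζ ∈ 𝔻. -/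
open Complex Metric Filter

open scoped Topology ENNReal

/-- If some power satisfies `‖a ^ N‖ ≤ c ^ N`, then the spectral radius of `a` is at
most `c`.  Proved via Gelfand's formula along the subsequence `N * m`. -/
lemma aux_spectralRadius_le_of_pow {A : Type*} [NormedRing A] [NormedAlgebra ℂ A]
    [CompleteSpace A] (a : A) {c : ℝ} (hc : 0 < c) {N : ℕ} (hN : 0 < N)
    (h : ‖a ^ N‖ ≤ c ^ N) : spectralRadius ℂ a ≤ ENNReal.ofReal c := by
  have hmul : Tendsto (fun m : ℕ => N * m) atTop atTop :=
    tendsto_atTop_mono (fun m => Nat.le_mul_of_pos_left m hN) tendsto_id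
  refine le_of_tendsto
    ((spectrum.pow_nnnorm_pow_one_div_tendsto_nhds_spectralRadius a).comp hmul) ?_
  filter_upwards [eventually_ge_atTop 1] with m hm
  have hmpos : 0 < m := hm
  have hreal : ‖a ^ (N * m)‖ ≤ c ^ (N * m) := by
    calc ‖a ^ (N * m)‖ = ‖(a ^ N) ^ m‖ := by rw [pow_mul]
      _ ≤ ‖a ^ N‖ ^ m := norm_pow_le' _ hmpos
      _ ≤ (c ^ N) ^ m := pow_le_pow_left₀ (norm_nonneg _) h m
      _ = c ^ (N * m) := by rw [← pow_mul]
  have hNm : (0 : ℕ) < N * m := Nat.mul_pos hN hmpos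
  have h1 : (‖a ^ (N * m)‖₊ : ℝ≥0∞) ≤ ENNReal.ofReal (c ^ (N * m)) := by
    rw [show ((‖a ^ (N * m)‖₊ : ℝ≥0∞)) = ENNReal.ofReal ‖a ^ (N * m)‖ from (ofReal_norm _).symm]
    exact ENNReal.ofReal_le_ofReal hreal
  have h2 := ENNReal.rpow_le_rpow h1 (by positivity : (0 : ℝ) ≤ 1 / ((N * m : ℕ) : ℝ))
  refine le_trans h2 (le_of_eq ?_)
  rw [ENNReal.ofReal_pow hc.le, ← ENNReal.rpow_natCast, ← ENNReal.rpow_mul,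
    mul_one_div, div_self (by exact_mod_cast hNm.ne'), ENNReal.rpow_one]

/-- If f : 𝔻 → A is holomorphic into a complex unital Banach algebra and, for all R
close enough to 1 and all |ζ| = R, the spectral radius of f(ζ) is < 1/R, then
r(f(ζ)) ≤ 1 throughout the disc. -/
theorem spectralRadius_le_one_of_boundary_bound {A : Type*} [NormedRing A]
    [NormedAlgebra ℂ A] [CompleteSpace A] (f : ℂ → A)
    (hf : DifferentiableOn ℂ f (Metric.ball (0 : ℂ) 1))
    (R₀ : ℝ) (hR₀ : R₀ ∈ Set.Ioo (0 : ℝ) 1)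
    (hbound : ∀ R ∈ Set.Ioo R₀ 1, ∀ ζ : ℂ, ‖ζ‖ = R →
      spectralRadius ℂ (f ζ) < ENNReal.ofReal (1 / R)) :
    ∀ ζ ∈ Metric.ball (0 : ℂ) 1, spectralRadius ℂ (f ζ) ≤ 1 := by
  intro ζ₀ hζ₀
  rw [mem_ball_zero_iff] at hζ₀
  set M : ℝ := max R₀ ‖ζ₀‖ with hM
  have hM1 : M < 1 := max_lt hR₀.2 (by simpa using hζ₀)
  -- main step: the bound 1/R for every radius R ∈ (M, 1)
  have key : ∀ R ∈ Set.Ioo M 1, spectralRadius ℂ (f ζ₀) ≤ ENNReal.ofReal (1 / R) := by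
    intro R hR
    have hR0 : 0 < R := hR₀.1.trans ((le_max_left _ _).trans_lt hR.1)
    have hRlt1 : R < 1 := hR.2
    have hRinv : 0 < 1 / R := by positivity
    have hsub : closedBall (0 : ℂ) R ⊆ ball (0 : ℂ) 1 := by
      intro x hx
      rw [mem_closedBall_zero_iff] at hx
      exact mem_ball_zero_iff.mpr (hx.trans_lt hRlt1)
    have hsphere_sub : sphere (0 : ℂ) R ⊆ ball (0 : ℂ) 1 :=
      (sphere_subset_closedBall).trans hsub
    -- the open sets used for the compactness argument
    set U : ℕ → Set ℂ := fun n =>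
      ball (0 : ℂ) 1 ∩ (fun ζ => ‖f ζ ^ (n + 1)‖) ⁻¹' Set.Iio ((1 / R) ^ (n + 1)) with hU
    have hUopen : ∀ n, IsOpen (U n) := fun n =>
      ((hf.continuousOn.pow (n + 1)).norm).isOpen_inter_preimage isOpen_ball isOpen_Iio
    have hcover : sphere (0 : ℂ) R ⊆ ⋃ n, U n := by
      intro ζ hζ
      have habs : ‖ζ‖ = R := by simpa using mem_sphere_zero_iff_norm.mp hζ
      have hlt := hbound R ⟨(le_max_left R₀ _).trans_lt hR.1, hRlt1⟩ ζ habs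
      -- Gelfand's formula: eventually the root of the norm is below 1/R
      have hev : ∀ᶠ n : ℕ in atTop,
          (‖f ζ ^ n‖₊ : ℝ≥0∞) ^ (1 / (n : ℝ)) < ENNReal.ofReal (1 / R) :=
        (spectrum.pow_nnnorm_pow_one_div_tendsto_nhds_spectralRadius (f ζ)).eventually
          (Filter.Tendsto.eventually_lt_const hlt tendsto_id) |>.mono fun _ h => h
      obtain ⟨n, hn, hn1⟩ := (hev.and (eventually_ge_atTop 1)).exists
      have hnR : ((n : ℝ)) ≠ 0 := by positivity
      -- raise to the n-th power
      have hpow := ENNReal.rpow_lt_rpow hn (by positivity : (0 : ℝ) < (n : ℝ))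
      rw [← ENNReal.rpow_mul, one_div_mul_cancel hnR, ENNReal.rpow_one] at hpow
      have hofr : (ENNReal.ofReal (1 / R)) ^ ((n : ℕ) : ℝ) =
          ENNReal.ofReal ((1 / R) ^ n) := by
        rw [ENNReal.rpow_natCast, ENNReal.ofReal_pow hRinv.le]
      rw [hofr, show ((‖f ζ ^ n‖₊ : ℝ≥0∞)) = ENNReal.ofReal ‖f ζ ^ n‖ from (ofReal_norm _).symm] at hpow
      have hnorm : ‖f ζ ^ n‖ < (1 / R) ^ n :=
        (ENNReal.ofReal_lt_ofReal_iff_of_nonneg (norm_nonneg _)).mp hpow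
      refine Set.mem_iUnion.mpr ⟨n - 1, hsphere_sub hζ, ?_⟩
      simpa [Nat.sub_add_cancel hn1] using hnorm
    obtain ⟨t, ht⟩ := (isCompact_sphere (0 : ℂ) R).elim_finite_subcover U hUopen hcover
    set N : ℕ := ∏ n ∈ t, (n + 1) with hNdef
    have hNpos : 0 < N := Finset.prod_pos fun n _ => n.succ_pos
    -- uniform bound on the sphere for the N-th power
    have hbdd : ∀ ζ ∈ sphere (0 : ℂ) R, ‖f ζ ^ N‖ ≤ (1 / R) ^ N := by
      intro ζ hζ
      obtain ⟨n, hnt, hζn⟩ := Set.mem_iUnion₂.mp (ht hζ)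
      have hdvd : (n + 1) ∣ N := Finset.dvd_prod_of_mem _ hnt
      obtain ⟨k, hk⟩ := hdvd
      have hkpos : 0 < k := by
        rcases Nat.eq_zero_or_pos k with h | h
        · exact absurd (hk.trans (by rw [h, mul_zero])) hNpos.ne'
        · exact h
      have hζlt : ‖f ζ ^ (n + 1)‖ < (1 / R) ^ (n + 1) := hζn.2
      calc ‖f ζ ^ N‖ = ‖(f ζ ^ (n + 1)) ^ k‖ := by rw [← pow_mul, ← hk]
        _ ≤ ‖f ζ ^ (n + 1)‖ ^ k := norm_pow_le' _ hkpos
        _ ≤ ((1 / R) ^ (n + 1)) ^ k := pow_le_pow_left₀ (norm_nonneg _) hζlt.le k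
        _ = (1 / R) ^ N := by rw [← pow_mul, ← hk]
    -- maximum modulus principle for f ^ N
    have hmax : ‖f ζ₀ ^ N‖ ≤ (1 / R) ^ N := by
      have hdiff' : DiffContOnCl ℂ (fun ζ => f ζ ^ N) (ball (0 : ℂ) R) :=
        DifferentiableOn.diffContOnCl (by
          rw [closure_ball (0 : ℂ) hR0.ne']
          exact (hf.pow N).mono hsub)
      have hfront : ∀ z ∈ frontier (ball (0 : ℂ) R), ‖f z ^ N‖ ≤ (1 / R) ^ N := by
        rw [frontier_ball (0 : ℂ) hR0.ne']
        exact hbdd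
      have hz : ζ₀ ∈ closure (ball (0 : ℂ) R) := by
        rw [closure_ball (0 : ℂ) hR0.ne']
        exact mem_closedBall_zero_iff.mpr
          (le_of_lt (by simpa using (le_max_right R₀ ‖ζ₀‖).trans_lt hR.1))
      exact Complex.norm_le_of_forall_mem_frontier_norm_le isBounded_ball hdiff' hfront hz
    exact aux_spectralRadius_le_of_pow (f ζ₀) hRinv hNpos hmax
  -- let R → 1⁻
  have htend : Tendsto (fun R : ℝ => ENNReal.ofReal (1 / R)) (𝓝[<] (1 : ℝ)) (𝓝 1) := by
    have h1 : Tendsto (fun R : ℝ => 1 / R) (𝓝 (1 : ℝ)) (𝓝 1) := by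
      have := (continuousAt_inv₀ (one_ne_zero : (1 : ℝ) ≠ 0)).tendsto
      simpa [one_div] using this
    have h2 : Tendsto (fun R : ℝ => ENNReal.ofReal (1 / R)) (𝓝 (1 : ℝ)) (𝓝 1) := by
      simpa [Function.comp_def] using (ENNReal.continuous_ofReal.tendsto 1).comp h1
    exact h2.mono_left nhdsWithin_le_nhds
  refine ge_of_tendsto htend ?_
  filter_upwards [Ioo_mem_nhdsLT_of_mem ⟨hM1, le_refl (1 : ℝ)⟩] with R hR
  exact key R hR
end
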